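/- Let H, (e_k), (λ_k), E_A, R_A and (f_k), (μ_k), E_B, R_B be as in the context. Then for every x, y ∈ H, τ > 0 and n ≥ 1, ‖R_B(τ)^n y − R_A(τ)^n x‖ ≤ sup_{t ≥ 0} ‖E_B(t)y − E_A(t)x‖. -/

import Mathlib

open MeasureTheory
open scoped RealInnerProductSpace ENNReal

section auxH
variable {H : Type*} [NormedAddCommGroup H] [InnerProductSpace ℝ H] [CompleteSpace H]

lemma aux_sq_mul_le (a c : ℝ) (h : |c| ≤ 1) : (c * a) * (c * a) ≤ a * a := by
  have h1 : c * c ≤ 1 := by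
    rw [← abs_mul_abs_self c]; nlinarith [abs_nonneg c]
  nlinarith [mul_self_nonneg a]

lemma aux_abs_mul_le (a b : ℝ) : |a * b| ≤ (a * a + b * b) / 2 := by
  rw [abs_mul]
  nlinarith [sq_nonneg (|a| - |b|), abs_mul_abs_self a, abs_mul_abs_self b]

lemma aux_term_bound (w ex a b : ℝ) (hw : 0 ≤ w) (hex : 0 < ex) (hex1 : ex ≤ 1) :
    |w * (ex * a * b)| ≤ w * |a * b| := by
  have h : |w * (ex * a * b)| = w * (ex * |a * b|) := by
    rw [abs_mul, abs_of_nonneg hw, mul_assoc, abs_mul, abs_of_pos hex]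
  rw [h]
  exact mul_le_mul_of_nonneg_left (mul_le_of_le_one_left (abs_nonneg _) hex1) hw

omit [CompleteSpace H] in
lemma aux_hasSum_sq (e : HilbertBasis ℕ ℝ H) (v : H) :
    HasSum (fun k => ⟪e k, v⟫ * ⟪e k, v⟫) (‖v‖ * ‖v‖) := by
  have h := e.hasSum_inner_mul_inner v v
  rw [real_inner_self_eq_norm_mul_norm] at h
  have he : (fun k => ⟪e k, v⟫ * ⟪e k, v⟫) = (fun k => ⟪v, e k⟫ * ⟪e k, v⟫) := by
    funext k; rw [real_inner_comm v (e k)]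
  rw [he]; exact h

omit [CompleteSpace H] in
lemma aux_summable_sq' (e : HilbertBasis ℕ ℝ H) (v : H) :
    Summable (fun k => ⟪v, e k⟫ * ⟪v, e k⟫) := by
  have h := (aux_hasSum_sq e v).summable
  have he : (fun k => ⟪v, e k⟫ * ⟪v, e k⟫) = (fun k => ⟪e k, v⟫ * ⟪e k, v⟫) := by
    funext k; rw [real_inner_comm v (e k)]
  rw [he]; exact h

omit [CompleteSpace H] in
lemma aux_memℓp (e : HilbertBasis ℕ ℝ H) (c : ℕ → ℝ) (hc : ∀ k, |c k| ≤ 1) (v : H) :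
    Memℓp (fun k => c k * ⟪e k, v⟫) 2 := by
  apply memℓp_gen
  have h2 : (2 : ℝ≥0∞).toReal = 2 := by norm_num
  rw [h2]
  apply Summable.of_nonneg_of_le (fun k => by positivity)
    (fun k => ?_) (aux_hasSum_sq e v).summable
  rw [Real.norm_eq_abs, show ((2:ℝ)) = ((2:ℕ):ℝ) by norm_num, Real.rpow_natCast, sq_abs,
    pow_two]
  exact aux_sq_mul_le _ _ (hc k)

lemma aux_hasSum_smul (e : HilbertBasis ℕ ℝ H) (c : ℕ → ℝ) (hc : ∀ k, |c k| ≤ 1) (v : H) :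
    HasSum (fun k => (c k * ⟪e k, v⟫) • e k)
      (e.repr.symm ⟨fun k => c k * ⟪e k, v⟫, aux_memℓp e c hc v⟩) :=
  e.hasSum_repr_symm ⟨fun k => c k * ⟪e k, v⟫, aux_memℓp e c hc v⟩

lemma aux_hasSum_inner (e : HilbertBasis ℕ ℝ H) (c : ℕ → ℝ) (hc : ∀ k, |c k| ≤ 1)
    (v z : H) :
    HasSum (fun k => c k * ⟪e k, v⟫ * ⟪z, e k⟫)
      ⟪z, ∑' k, (c k * ⟪e k, v⟫) • e k⟫ := by
  have h1 := aux_hasSum_smul e c hc v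
  rw [h1.tsum_eq]
  have h2 := h1.mapL (innerSL ℝ z)
  have he : (fun k => (innerSL ℝ z) ((c k * ⟪e k, v⟫) • e k))
      = fun k => c k * ⟪e k, v⟫ * ⟪z, e k⟫ := by
    funext k; simp only [innerSL_apply_apply, real_inner_smul_right]
  rwa [he] at h2

lemma aux_norm_tsum_le (e : HilbertBasis ℕ ℝ H) (c : ℕ → ℝ) (hc : ∀ k, |c k| ≤ 1) (v : H) :
    ‖∑' k, (c k * ⟪e k, v⟫) • e k‖ ≤ ‖v‖ := by
  have h1 := aux_hasSum_smul e c hc v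
  rw [h1.tsum_eq]
  set T := e.repr.symm ⟨fun k => c k * ⟪e k, v⟫, aux_memℓp e c hc v⟩ with hT
  have hrepr : ∀ k, ⟪e k, T⟫ = c k * ⟪e k, v⟫ := by
    intro k
    have h3 : e.repr T k = c k * ⟪e k, v⟫ := by rw [hT, e.repr.apply_symm_apply]
    rw [← h3, e.repr_apply_apply]
  have hTsum := aux_hasSum_sq e T
  have hvsum := aux_hasSum_sq e v
  have hle : ‖T‖ * ‖T‖ ≤ ‖v‖ * ‖v‖ := by
    refine hasSum_le (fun k => ?_) hTsum hvsum
    rw [hrepr k]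
    exact aux_sq_mul_le _ _ (hc k)
  nlinarith [norm_nonneg T, norm_nonneg v]

end auxH

noncomputable def wfun (τ : ℝ) (n : ℕ) : ℝ → ℝ :=
  fun t => (τ ^ (n:ℝ) * Real.Gamma n)⁻¹ * (t ^ ((n:ℝ)-1) * Real.exp (-(τ⁻¹ * t)))

lemma wfun_nonneg {τ : ℝ} (hτ : 0 < τ) (n : ℕ) {t : ℝ} (ht : 0 < t) :
    0 ≤ wfun τ n t := by
  unfold wfun
  positivity

lemma wfun_mul_exp_eq (τ : ℝ) (n : ℕ) (c : ℝ) :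
    (fun t : ℝ => wfun τ n t * Real.exp (-t * c))
      = fun t : ℝ => (τ ^ (n:ℝ) * Real.Gamma n)⁻¹ *
          (t ^ ((n:ℝ)-1) * Real.exp (-((τ⁻¹ + c) * t))) := by
  funext t
  unfold wfun
  rw [mul_assoc, mul_assoc, ← Real.exp_add]
  ring_nf

lemma gamma_integrable {τ : ℝ} (hτ : 0 < τ) {n : ℕ} (hn : 1 ≤ n) {c : ℝ} (hc : 0 ≤ c) :
    IntegrableOn (fun t : ℝ => wfun τ n t * Real.exp (-t * c)) (Set.Ioi 0) := by
  rw [wfun_mul_exp_eq]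
  have hr : 0 < τ⁻¹ + c := by positivity
  have hs : (-1 : ℝ) < (n:ℝ) - 1 := by
    have : (1:ℝ) ≤ (n:ℝ) := by exact_mod_cast hn
    linarith
  have h := integrableOn_rpow_mul_exp_neg_mul_rpow hs (p := 1) one_pos hr
  have h2 : (fun x : ℝ => x ^ ((n:ℝ)-1) * Real.exp (-(τ⁻¹ + c) * x ^ (1:ℝ)))
      = fun t : ℝ => t ^ ((n:ℝ)-1) * Real.exp (-((τ⁻¹ + c) * t)) := by
    funext t; rw [Real.rpow_one, neg_mul]
  rw [h2] at h
  exact h.const_mul _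

lemma gamma_integral {τ : ℝ} (hτ : 0 < τ) {n : ℕ} (hn : 1 ≤ n) {c : ℝ} (hc : 0 ≤ c) :
    ∫ t in Set.Ioi (0:ℝ), wfun τ n t * Real.exp (-t * c) = ((1 + τ * c) ^ n)⁻¹ := by
  rw [wfun_mul_exp_eq]
  have hr : 0 < τ⁻¹ + c := by positivity
  have hna : (0:ℝ) < (n:ℝ) := by
    have : (1:ℝ) ≤ (n:ℝ) := by exact_mod_cast hn
    linarith
  rw [MeasureTheory.integral_const_mul, Real.integral_rpow_mul_exp_neg_mul_Ioi hna hr]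
  have hΓ : 0 < Real.Gamma n := Real.Gamma_pos_of_pos hna
  have hτn : (0:ℝ) < τ ^ (n:ℝ) := Real.rpow_pos_of_pos hτ _
  have h1p : (0:ℝ) < 1 + τ * c := by positivity
  have hmul : τ ^ (n:ℝ) * (τ⁻¹ + c) ^ (n:ℝ) = (1 + τ * c) ^ (n:ℝ) := by
    rw [← Real.mul_rpow hτ.le hr.le]
    congr 1
    field_simp
  have hrn : (0:ℝ) < (τ⁻¹ + c) ^ (n:ℝ) := Real.rpow_pos_of_pos hr _
  rw [one_div, ← Real.rpow_natCast (1 + τ * c) n, ← hmul,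
    Real.inv_rpow hr.le]
  field_simp

/-- Lemma 3(ii) in the self-adjoint diagonal setting:
`‖R_B(τ)ⁿ y − R_A(τ)ⁿ x‖ ≤ sup_{t ≥ 0} ‖E_B(t)y − E_A(t)x‖`. -/
theorem euler_lemma_sup {H : Type*} [NormedAddCommGroup H] [InnerProductSpace ℝ H]
    [CompleteSpace H]
    (e f : HilbertBasis ℕ ℝ H) (lam mu : ℕ → ℝ)
    (hlam_pos : ∀ k, 0 < lam k) (hlam_mono : Monotone lam)
    (hlam_top : Filter.Tendsto lam Filter.atTop Filter.atTop)
    (hmu_pos : ∀ k, 0 < mu k) (hmu_mono : Monotone mu)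
    (hmu_top : Filter.Tendsto mu Filter.atTop Filter.atTop)
    (EA EB : ℝ → H → H) (RA RB : ℝ → ℕ → H → H)
    (hEA : ∀ t v, EA t v = ∑' k, (Real.exp (-t * lam k) * ⟪e k, v⟫) • e k)
    (hEB : ∀ t v, EB t v = ∑' k, (Real.exp (-t * mu k) * ⟪f k, v⟫) • f k)
    (hRA : ∀ τ n v, RA τ n v = ∑' k, (((1 + τ * lam k) ^ n)⁻¹ * ⟪e k, v⟫) • e k)
    (hRB : ∀ τ n v, RB τ n v = ∑' k, (((1 + τ * mu k) ^ n)⁻¹ * ⟪f k, v⟫) • f k)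
    (x y : H) (τ : ℝ) (hτ : 0 < τ) (n : ℕ) (hn : 1 ≤ n) :
    ‖RB τ n y - RA τ n x‖ ≤ sSup ((fun t => ‖EB t y - EA t x‖) '' Set.Ici (0 : ℝ)) := by
  classical
  set S := sSup ((fun t => ‖EB t y - EA t x‖) '' Set.Ici (0 : ℝ)) with hSdef
  -- coefficient bounds
  have hcA : ∀ t : ℝ, 0 ≤ t → ∀ k, |Real.exp (-t * lam k)| ≤ 1 := by
    intro t ht k
    rw [abs_of_pos (Real.exp_pos _)]
    rw [Real.exp_le_one_iff]
    nlinarith [hlam_pos k]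
  have hcB : ∀ t : ℝ, 0 ≤ t → ∀ k, |Real.exp (-t * mu k)| ≤ 1 := by
    intro t ht k
    rw [abs_of_pos (Real.exp_pos _)]
    rw [Real.exp_le_one_iff]
    nlinarith [hmu_pos k]
  have hrA : ∀ k, |((1 + τ * lam k) ^ n)⁻¹| ≤ 1 := by
    intro k
    have h1 : (1:ℝ) ≤ 1 + τ * lam k := by nlinarith [hlam_pos k]
    have h2 : (1:ℝ) ≤ (1 + τ * lam k) ^ n := one_le_pow₀ h1
    rw [abs_of_pos (by positivity)]
    exact inv_le_one_of_one_le₀ h2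
  have hrB : ∀ k, |((1 + τ * mu k) ^ n)⁻¹| ≤ 1 := by
    intro k
    have h1 : (1:ℝ) ≤ 1 + τ * mu k := by nlinarith [hmu_pos k]
    have h2 : (1:ℝ) ≤ (1 + τ * mu k) ^ n := one_le_pow₀ h1
    rw [abs_of_pos (by positivity)]
    exact inv_le_one_of_one_le₀ h2
  -- boundedness of the sup set and basic facts about S
  have hbdd : BddAbove ((fun t => ‖EB t y - EA t x‖) '' Set.Ici (0 : ℝ)) := by
    refine ⟨‖y‖ + ‖x‖, ?_⟩
    rintro s ⟨t, ht, rfl⟩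
    refine le_trans (norm_sub_le _ _) (add_le_add ?_ ?_)
    · rw [hEB]; exact aux_norm_tsum_le f _ (hcB t ht) y
    · rw [hEA]; exact aux_norm_tsum_le e _ (hcA t ht) x
  have hmem : ∀ t : ℝ, 0 ≤ t → ‖EB t y - EA t x‖ ≤ S :=
    fun t ht => le_csSup hbdd ⟨t, ht, rfl⟩
  have hS0 : 0 ≤ S := le_trans (norm_nonneg _) (hmem 0 le_rfl)
  set u := RB τ n y - RA τ n x with hu
  -- inner-product expansions of the resolvent terms
  have hRBu : HasSum (fun k => ((1 + τ * mu k) ^ n)⁻¹ * ⟪f k, y⟫ * ⟪u, f k⟫)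
      ⟪u, RB τ n y⟫ := by
    rw [hRB]
    exact aux_hasSum_inner f (fun k => ((1 + τ * mu k) ^ n)⁻¹) hrB y u
  have hRAu : HasSum (fun k => ((1 + τ * lam k) ^ n)⁻¹ * ⟪e k, x⟫ * ⟪u, e k⟫)
      ⟪u, RA τ n x⟫ := by
    rw [hRA]
    exact aux_hasSum_inner e (fun k => ((1 + τ * lam k) ^ n)⁻¹) hrA x u
  have huu : ‖u‖ * ‖u‖
      = ∑' k, (((1 + τ * mu k) ^ n)⁻¹ * ⟪f k, y⟫ * ⟪u, f k⟫
          - ((1 + τ * lam k) ^ n)⁻¹ * ⟪e k, x⟫ * ⟪u, e k⟫) := by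
    rw [(hRBu.sub hRAu).tsum_eq, ← inner_sub_right, ← hu,
      real_inner_self_eq_norm_mul_norm]
  -- the integrand family
  set F : ℕ → ℝ → ℝ := fun k t =>
      wfun τ n t * (Real.exp (-t * mu k) * ⟪f k, y⟫ * ⟪u, f k⟫)
      - wfun τ n t * (Real.exp (-t * lam k) * ⟪e k, x⟫ * ⟪u, e k⟫) with hFdef
  have hFrw : ∀ k, F k = fun t =>
      (wfun τ n t * Real.exp (-t * mu k)) * (⟪f k, y⟫ * ⟪u, f k⟫)
      - (wfun τ n t * Real.exp (-t * lam k)) * (⟪e k, x⟫ * ⟪u, e k⟫) := by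
    intro k; funext t; simp only [hFdef]; ring
  have hFint : ∀ k, IntegrableOn (F k) (Set.Ioi 0) := by
    intro k
    rw [hFrw k]
    exact ((gamma_integrable hτ hn (hmu_pos k).le).mul_const _).sub
      ((gamma_integrable hτ hn (hlam_pos k).le).mul_const _)
  have hFval : ∀ k, ∫ t in Set.Ioi (0:ℝ), F k t
      = ((1 + τ * mu k) ^ n)⁻¹ * ⟪f k, y⟫ * ⟪u, f k⟫
        - ((1 + τ * lam k) ^ n)⁻¹ * ⟪e k, x⟫ * ⟪u, e k⟫ := by
    intro k
    rw [hFrw k,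
      MeasureTheory.integral_sub ((gamma_integrable hτ hn (hmu_pos k).le).mul_const _)
        ((gamma_integrable hτ hn (hlam_pos k).le).mul_const _),
      MeasureTheory.integral_mul_const, MeasureTheory.integral_mul_const,
      gamma_integral hτ hn (hmu_pos k).le, gamma_integral hτ hn (hlam_pos k).le]
    ring
  -- integrability and total mass of the weight
  have hwint : IntegrableOn (wfun τ n) (Set.Ioi 0) := by
    have h := gamma_integrable hτ hn (le_refl (0:ℝ))
    simpa using h
  have hwval : ∫ t in Set.Ioi (0:ℝ), wfun τ n t = 1 := by
    have h := gamma_integral hτ hn (le_refl (0:ℝ))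
    simpa using h
  -- bound on the integral of ‖F k‖
  have hnormint : ∀ k, ∫ t in Set.Ioi (0:ℝ), ‖F k t‖
      ≤ |⟪f k, y⟫ * ⟪u, f k⟫| + |⟪e k, x⟫ * ⟪u, e k⟫| := by
    intro k
    set C : ℝ := |⟪f k, y⟫ * ⟪u, f k⟫| + |⟪e k, x⟫ * ⟪u, e k⟫| with hC
    have hg : IntegrableOn (fun t => wfun τ n t * C) (Set.Ioi 0) := hwint.mul_const _
    have hbound : ∀ t ∈ Set.Ioi (0:ℝ), ‖F k t‖ ≤ wfun τ n t * C := by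
      intro t ht
      have ht' : (0:ℝ) < t := ht
      have hw0 := wfun_nonneg hτ n ht'
      have heB : |Real.exp (-t * mu k)| ≤ 1 := hcB t ht'.le k
      have heA : |Real.exp (-t * lam k)| ≤ 1 := hcA t ht'.le k
      have he1 : Real.exp (-t * mu k) ≤ 1 := le_trans (le_abs_self _) heB
      have he2 : Real.exp (-t * lam k) ≤ 1 := le_trans (le_abs_self _) heA
      have h1 : ‖F k t‖ ≤ wfun τ n t * |⟪f k, y⟫ * ⟪u, f k⟫|
          + wfun τ n t * |⟪e k, x⟫ * ⟪u, e k⟫| := by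
        simp only [hFdef]
        refine le_trans (norm_sub_le _ _) (add_le_add ?_ ?_)
        · rw [Real.norm_eq_abs]
          exact aux_term_bound _ _ _ _ hw0 (Real.exp_pos _) he1
        · rw [Real.norm_eq_abs]
          exact aux_term_bound _ _ _ _ hw0 (Real.exp_pos _) he2
      refine le_trans h1 ?_
      rw [hC, mul_add]
    have h2 : ∫ t in Set.Ioi (0:ℝ), ‖F k t‖ ≤ ∫ t in Set.Ioi (0:ℝ), wfun τ n t * C := by
      refine MeasureTheory.integral_mono_of_nonneg
        (Filter.Eventually.of_forall (fun t => norm_nonneg _)) hg ?_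
      exact (ae_restrict_iff' measurableSet_Ioi).mpr (Filter.Eventually.of_forall hbound)
    calc ∫ t in Set.Ioi (0:ℝ), ‖F k t‖ ≤ ∫ t in Set.Ioi (0:ℝ), wfun τ n t * C := h2
      _ = (∫ t in Set.Ioi (0:ℝ), wfun τ n t) * C := MeasureTheory.integral_mul_const _ _
      _ = C := by rw [hwval, one_mul]
  -- summability of the bounds
  have hsummand : Summable
      (fun k => |⟪f k, y⟫ * ⟪u, f k⟫| + |⟪e k, x⟫ * ⟪u, e k⟫|) := by
    apply Summable.add
    · apply Summable.of_nonneg_of_le (fun k => abs_nonneg _)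
        (fun k => aux_abs_mul_le _ _)
      exact (((aux_hasSum_sq f y).summable.add (aux_summable_sq' f u))).div_const 2
    · apply Summable.of_nonneg_of_le (fun k => abs_nonneg _)
        (fun k => aux_abs_mul_le _ _)
      exact (((aux_hasSum_sq e x).summable.add (aux_summable_sq' e u))).div_const 2
  have hFsum : Summable (fun k => ∫ t in Set.Ioi (0:ℝ), ‖F k t‖) :=
    Summable.of_nonneg_of_le
      (fun k => MeasureTheory.integral_nonneg (fun t => norm_nonneg _)) hnormint hsummand
  -- swap sum and integral
  have hswap := MeasureTheory.integral_tsum_of_summable_integral_norm hFint hFsum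
  have huu2 : ‖u‖ * ‖u‖ = ∫ t in Set.Ioi (0:ℝ), ∑' k, F k t := by
    rw [← hswap, huu]
    exact tsum_congr (fun k => (hFval k).symm)
  -- pointwise identification of the series
  have hptwise : ∀ t ∈ Set.Ioi (0:ℝ),
      ∑' k, F k t = wfun τ n t * ⟪u, EB t y - EA t x⟫ := by
    intro t ht
    have ht0 : (0:ℝ) ≤ t := (le_of_lt ht)
    have hB := (aux_hasSum_inner f (fun k => Real.exp (-t * mu k)) (hcB t ht0) y u).mul_left
      (wfun τ n t)
    have hA := (aux_hasSum_inner e (fun k => Real.exp (-t * lam k)) (hcA t ht0) x u).mul_left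
      (wfun τ n t)
    have hsub := (hB.sub hA).tsum_eq
    have hfe : (fun k => wfun τ n t * (Real.exp (-t * mu k) * ⟪f k, y⟫ * ⟪u, f k⟫)
        - wfun τ n t * (Real.exp (-t * lam k) * ⟪e k, x⟫ * ⟪u, e k⟫)) = fun k => F k t := by
      funext k; simp only [hFdef]
    rw [hfe] at hsub
    rw [hsub, ← mul_sub, ← inner_sub_right, ← hEB, ← hEA]
  -- the main estimate
  have hkey : ‖u‖ * ‖u‖ ≤ S * ‖u‖ := by
    have hgint : IntegrableOn (fun t => wfun τ n t * (S * ‖u‖)) (Set.Ioi 0) :=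
      hwint.mul_const _
    have hbound : ∀ t ∈ Set.Ioi (0:ℝ), ‖∑' k, F k t‖ ≤ wfun τ n t * (S * ‖u‖) := by
      intro t ht
      rw [hptwise t ht, Real.norm_eq_abs, abs_mul,
        abs_of_nonneg (wfun_nonneg hτ n ht)]
      have h1 : |⟪u, EB t y - EA t x⟫| ≤ ‖u‖ * ‖EB t y - EA t x‖ := abs_real_inner_le_norm _ _
      have h2 : ‖EB t y - EA t x‖ ≤ S := hmem t (le_of_lt ht)
      have hw0 := wfun_nonneg hτ n (Set.mem_Ioi.mp ht)
      have h3 : |⟪u, EB t y - EA t x⟫| ≤ S * ‖u‖ := by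
        have h4 := mul_le_mul_of_nonneg_left h2 (norm_nonneg u)
        nlinarith
      exact mul_le_mul_of_nonneg_left h3 hw0
    have h3 : ‖∫ t in Set.Ioi (0:ℝ), ∑' k, F k t‖
        ≤ ∫ t in Set.Ioi (0:ℝ), wfun τ n t * (S * ‖u‖) := by
      refine MeasureTheory.norm_integral_le_of_norm_le hgint ?_
      exact (ae_restrict_iff' measurableSet_Ioi).mpr (Filter.Eventually.of_forall hbound)
    have h4 : ∫ t in Set.Ioi (0:ℝ), wfun τ n t * (S * ‖u‖) = S * ‖u‖ := by
      rw [MeasureTheory.integral_mul_const, hwval, one_mul]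
    calc ‖u‖ * ‖u‖ = ∫ t in Set.Ioi (0:ℝ), ∑' k, F k t := huu2
      _ ≤ ‖∫ t in Set.Ioi (0:ℝ), ∑' k, F k t‖ := le_abs_self _
      _ ≤ ∫ t in Set.Ioi (0:ℝ), wfun τ n t * (S * ‖u‖) := h3
      _ = S * ‖u‖ := h4
  rcases eq_or_lt_of_le (norm_nonneg u) with h0 | hpos
  · rw [← h0]; exact hS0
  · exact le_of_mul_le_mul_right hkey hpos
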